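/- In the poset of transfer systems on a finite group G ordered by inclusion, for any transfer system 𝒪 the set of disk-like transfer systems contained in 𝒪 has a maximal element 𝒪^d, namely the transfer system generated by all transfers H → G in 𝒪; moreover two subgroups of G are inseparable for 𝒪 if and only if they are inseparable for 𝒪^d. -/
import Mathlib


/-- A transfer system on a group `G`: a partial order `rel` on subgroups refining the
subgroup relation, closed under conjugation and restriction. -/
structure TransferSystem (G : Type*) [Group G] where
  rel : Subgroup G → Subgroup G → Prop
  le_of_rel : ∀ {K H : Subgroup G}, rel K H → K ≤ H
  refl : ∀ H : Subgroup G, rel H H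
  trans : ∀ {J K H : Subgroup G}, rel J K → rel K H → rel J H
  antisymm : ∀ {K H : Subgroup G}, rel K H → rel H K → K = H
  conj : ∀ (g : G) {K H : Subgroup G}, rel K H →
    rel (K.map (MulAut.conj g).toMonoidHom) (H.map (MulAut.conj g).toMonoidHom)
  restrict : ∀ {K H L : Subgroup G}, rel K H → L ≤ H → rel (K ⊓ L) L

/-- Conjugate subgroup `gKg⁻¹`. -/
def conjSub {G : Type*} [Group G] (g : G) (K : Subgroup G) : Subgroup G :=
  K.map (MulAut.conj g).toMonoidHom

/-- `H_𝒪(J)`: the minimal subgroup containing `J` which transfers to `G` (the top subgroup). -/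
noncomputable def HO {G : Type*} [Group G] (O : TransferSystem G) (J : Subgroup G) : Subgroup G :=
  sInf {H : Subgroup G | O.rel H ⊤ ∧ J ≤ H}

/-- `J ∈ [H]^𝒪`: the inseparability class of `H`, i.e. `H_𝒪(J)` is conjugate to `H`. -/
def inClass {G : Type*} [Group G] (O : TransferSystem G) (H J : Subgroup G) : Prop :=
  ∃ g : G, conjSub g (HO O J) = H

/-- `J` and `K` are 𝒪-inseparable: `H_𝒪(J)` and `H_𝒪(K)` are conjugate. -/
def TSInseparable {G : Type*} [Group G] (O : TransferSystem G) (J K : Subgroup G) : Prop :=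
  ∃ g : G, conjSub g (HO O J) = HO O K

/-- 𝒪 is disk-like: it is generated by its transfers of the form `H → G`, i.e. it is contained
in every transfer system containing those transfers. -/
def DiskLike {G : Type*} [Group G] (O : TransferSystem G) : Prop :=
  ∀ O' : TransferSystem G, (∀ H : Subgroup G, O.rel H ⊤ → O'.rel H ⊤) →
    ∀ K H : Subgroup G, O.rel K H → O'.rel K H

/-- For any transfer system 𝒪, the disk-like transfer systems contained in 𝒪 have a maximal
element `𝒪ᵈ`, namely the one generated by all transfers `H → G` of 𝒪; moreover two subgroups
are 𝒪-inseparable iff they are `𝒪ᵈ`-inseparable. -/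
theorem exists_max_diskLike {G : Type*} [Group G] [Finite G] (O : TransferSystem G) :
    ∃ Od : TransferSystem G, DiskLike Od ∧
      (∀ K H : Subgroup G, Od.rel K H → O.rel K H) ∧
      (∀ H : Subgroup G, O.rel H ⊤ → Od.rel H ⊤) ∧
      (∀ O' : TransferSystem G, DiskLike O' → (∀ K H : Subgroup G, O'.rel K H → O.rel K H) →
        ∀ K H : Subgroup G, O'.rel K H → Od.rel K H) ∧
      (∀ J K : Subgroup G, TSInseparable O J K ↔ TSInseparable Od J K) := by
  set Od : TransferSystem G :=
    { rel := fun K H => ∀ O' : TransferSystem G,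
        (∀ H : Subgroup G, O.rel H ⊤ → O'.rel H ⊤) → O'.rel K H
      le_of_rel := fun {K H} h => O.le_of_rel (h O (fun _ h => h))
      refl := fun H O' _ => O'.refl H
      trans := fun {J K H} h1 h2 O' hO' => O'.trans (h1 O' hO') (h2 O' hO')
      antisymm := fun {K H} h1 h2 =>
        le_antisymm (O.le_of_rel (h1 O (fun _ h => h))) (O.le_of_rel (h2 O (fun _ h => h)))
      conj := fun g {K H} h O' hO' => O'.conj g (h O' hO')
      restrict := fun {K H L} h hL O' hO' => O'.restrict (h O' hO') hL } with hOd
  have hsub : ∀ K H : Subgroup G, Od.rel K H → O.rel K H :=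
    fun K H h => h O (fun _ h => h)
  have htop : ∀ H : Subgroup G, O.rel H ⊤ → Od.rel H ⊤ :=
    fun H h O' hO' => hO' H h
  have htop' : ∀ H : Subgroup G, O.rel H ⊤ ↔ Od.rel H ⊤ :=
    fun H => ⟨htop H, hsub H ⊤⟩
  have hHO : ∀ J : Subgroup G, HO O J = HO Od J := by
    intro J
    unfold HO
    congr 1
    ext H
    simp [htop' H]
  refine ⟨Od, ?_, hsub, htop, ?_, ?_⟩
  · intro O' hO' K H h
    exact h O' (fun H hH => hO' H (htop H hH))
  · intro O' hDL hle K H h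
    exact hDL Od (fun H hH => htop H (hle H ⊤ hH)) K H h
  · intro J K
    unfold TSInseparable
    rw [hHO J, hHO K]
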